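/- Let K be an almost real closed field, let < be a linear order making K a linearly ordered field, and let A be a proper henselian valuation subring of K (A ≠ K, A a valuation subring of K that is henselian as a local ring) with associated valuation v. Then the topology on K induced by v coincides with the order topology induced by <. -/

import Mathlib

/-- A linear order on a field `K` (given by its strict order relation) making `K`
a linearly ordered field. -/
structure FieldOrder (K : Type*) [Field K] where
  /-- the strict order relation -/
  lt : K → K → Prop
  lt_trans : ∀ a b c : K, lt a b → lt b c → lt a c
  lt_irrefl : ∀ a : K, ¬ lt a a
  lt_total : ∀ a b : K, a ≠ b → lt a b ∨ lt b a
  add_lt_add_left : ∀ a b c : K, lt a b → lt (c + a) (c + b)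
  mul_pos : ∀ a b : K, lt 0 a → lt 0 b → lt 0 (a * b)

/-- A linearly ordered field (given by a `FieldOrder`) is real closed if every nonnegative
element is a square and every polynomial of odd degree has a root. -/
def FieldOrder.IsRealClosed {K : Type*} [Field K] (o : FieldOrder K) : Prop :=
  (∀ x : K, ¬ o.lt x 0 → ∃ y : K, y ^ 2 = x) ∧
    (∀ p : Polynomial K, Odd p.natDegree → ∃ x : K, p.eval x = 0)

/-- A field is almost real closed if it admits a henselian valuation subring whose
residue field admits an order making it a real closed field. -/
def IsAlmostRealClosedField (K : Type*) [Field K] : Prop :=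
  ∃ A : ValuationSubring K, HenselianLocalRing A ∧
    ∃ o : FieldOrder (IsLocalRing.ResidueField A), o.IsRealClosed

/-- The order topology on a linearly ordered field: the topology generated by the
open intervals. -/
def orderTopologyOf (K : Type*) [Field K] [LinearOrder K] [IsStrictOrderedRing K] : TopologicalSpace K :=
  TopologicalSpace.generateFrom {s | ∃ a b : K, s = Set.Ioo a b}

/-- The topology induced by the valuation associated to a valuation subring `A` of `K`:
the topology generated by the "open balls" `{x | v (x - a) < γ}` (in the multiplicative
convention of Mathlib, `v (x - a) < γ` corresponds to `v (x - a) > γ` in the additive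
convention), which form a neighbourhood basis at each point `a`. -/
def valuationTopologyOf {K : Type*} [Field K] (A : ValuationSubring K) :
    TopologicalSpace K :=
  TopologicalSpace.generateFrom
    {s | ∃ (a : K) (γ : A.ValueGroup), γ ≠ 0 ∧ s = {x | A.valuation (x - a) < γ}}



section Aux

open TopologicalSpace Polynomial

variable {K : Type*} [Field K] [LinearOrder K] [IsStrictOrderedRing K] (A : ValuationSubring K)

/-- In a linearly ordered field, `2` is a unit of any henselian valuation subring,
since `X^2 + X + 2` would otherwise have a root, but `x^2 + x + 2 > 0` always. -/
lemma aux_two_isUnit [HenselianLocalRing A] : IsUnit (2 : A) := by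
  by_contra h2
  have hm : (2 : A) ∈ IsLocalRing.maximalIdeal A := h2
  obtain ⟨a, ha, -⟩ := HenselianLocalRing.is_henselian (R := A)
    (X ^ 2 + X + C 2) (by monicity!) 0 (by simpa using hm) (by simp)
  have ha' : (a : K) ^ 2 + (a : K) + 2 = 0 := by
    have := congrArg (algebraMap A K) ha
    push_cast [Polynomial.IsRoot, Polynomial.eval_add, Polynomial.eval_pow] at this ⊢
    have h2c : ((2 : A) : K) = 2 := by norm_cast
    simpa [h2c] using this
  nlinarith [sq_nonneg (2 * (a : K) + 1)]

lemma aux_sq [HenselianLocalRing A] (a : A) (ha : a ∈ IsLocalRing.maximalIdeal A) :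
    ∃ b : A, b * b = 1 + a := by
  obtain ⟨b, hb, -⟩ := HenselianLocalRing.is_henselian (R := A)
    (X ^ 2 - C (1 + a)) (by monicity!) 1
    (by simpa using (IsLocalRing.maximalIdeal A).neg_mem ha)
    (by simpa [one_add_one_eq_two] using aux_two_isUnit A)
  refine ⟨b, ?_⟩
  have : b ^ 2 - (1 + a) = 0 := by simpa [Polynomial.IsRoot] using hb
  have := sub_eq_zero.mp this
  rw [← this]; ring

lemma aux_pos_one_add [HenselianLocalRing A] (x : K) (hx : A.valuation x < 1) :
    0 < 1 + x := by
  have hxA : x ∈ A := (A.valuation_le_one_iff x).mp hx.le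
  have hxm : (⟨x, hxA⟩ : A) ∈ IsLocalRing.maximalIdeal A :=
    (A.valuation_lt_one_iff _).mpr hx
  obtain ⟨b, hb⟩ := aux_sq A _ hxm
  have hb' : (1 + x : K) = (b : K) * (b : K) := by
    exact (congrArg (algebraMap A K) hb).symm
  have hne : (1 + x : K) ≠ 0 := by
    intro h
    have := Valuation.map_one_add_of_lt A.valuation hx
    rw [h] at this
    simp at this
  have : (0 : K) ≤ 1 + x := hb' ▸ mul_self_nonneg _
  exact lt_of_le_of_ne this (Ne.symm hne)

lemma aux_abs_lt_one [HenselianLocalRing A] (x : K) (hx : A.valuation x < 1) :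
    |x| < 1 := by
  have h1 : 0 < 1 + x := aux_pos_one_add A x hx
  have h2 : 0 < 1 + (-x) := aux_pos_one_add A (-x) (by simpa using hx)
  rw [abs_lt]; constructor <;> linarith

/-- Strict comparison: smaller valuation forces smaller absolute value. -/
lemma aux_abs_lt [HenselianLocalRing A] (u w : K) (hw : w ≠ 0)
    (h : A.valuation u < A.valuation w) : |u| < |w| := by
  have hvw : A.valuation w ≠ 0 := (Valuation.ne_zero_iff _).mpr hw
  have hdiv : A.valuation (u / w) < 1 := by
    rw [map_div₀]
    have : A.valuation u < 1 * A.valuation w := by simpa using h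
    simpa [div_eq_mul_inv] using mul_inv_lt_of_lt_mul₀ this
  have := aux_abs_lt_one A _ hdiv
  rw [abs_div] at this
  rwa [div_lt_one (abs_pos.mpr hw)] at this

lemma aux_val_le [HenselianLocalRing A] (u w : K) (h : |u| < |w|) :
    A.valuation u ≤ A.valuation w := by
  by_contra hc
  push_neg at hc
  have hu : u ≠ 0 := by
    intro h0
    rw [h0] at hc
    simpa using lt_of_le_of_lt zero_le' hc
  exact absurd (aux_abs_lt A w u hu hc) (not_lt.mpr h.le)

lemma aux_gen_open {α : Type*} (T : Set (Set α)) (U : Set α)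
    (h : ∀ x ∈ U, ∃ t ∈ T, x ∈ t ∧ t ⊆ U) :
    (TopologicalSpace.generateFrom T).IsOpen U := by
  have hU : U = ⋃₀ {t | t ∈ T ∧ t ⊆ U} := by
    ext x
    constructor
    · intro hx
      obtain ⟨t, ht, hxt, htU⟩ := h x hx
      exact ⟨t, ⟨ht, htU⟩, hxt⟩
    · rintro ⟨t, ⟨-, htU⟩, hxt⟩
      exact htU hxt
  rw [hU]
  exact TopologicalSpace.GenerateOpen.sUnion _ fun t ht => TopologicalSpace.GenerateOpen.basic t ht.1

end Aux

theorem valuationTopology_eq_orderTopology' (K : Type*) [Field K] [LinearOrder K]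
    [IsStrictOrderedRing K]
    (A : ValuationSubring K)
    (hproper : (A : Set K) ≠ Set.univ) (hhens : HenselianLocalRing A) :
    TopologicalSpace.generateFrom
      {s | ∃ (a : K) (γ : A.ValueGroup), γ ≠ 0 ∧ s = {x | A.valuation (x - a) < γ}} =
    TopologicalSpace.generateFrom {s | ∃ a b : K, s = Set.Ioo a b} := by
  haveI := hhens
  -- get an infinitesimal d : nonzero, valuation < 1, |d| < 1
  obtain ⟨c, hc⟩ : ∃ c : K, c ∉ A := by
    by_contra h
    push_neg at h
    exact hproper (Set.eq_univ_of_forall h)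
  have hc0 : c ≠ 0 := fun h => hc (h ▸ A.zero_mem)
  set d := c⁻¹ with hd
  have hd0 : d ≠ 0 := inv_ne_zero hc0
  have hdv : A.valuation d < 1 := by
    have h1 : 1 < A.valuation c := lt_of_not_ge fun hle => hc ((A.valuation_le_one_iff c).mp hle)
    have : (1 : A.ValueGroup) < 1 * A.valuation c := by simpa using h1
    rw [hd, map_inv₀]
    simpa using mul_inv_lt_of_lt_mul₀ this
  have hdabs : |d| < 1 := aux_abs_lt_one A d hdv
  apply le_antisymm
  · -- valuation topology ≤ order topology : every interval is valuation-open
    apply le_generateFrom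
    rintro s ⟨a, b, rfl⟩
    apply aux_gen_open
    intro x hx
    obtain ⟨hax, hxb⟩ := hx
    set ε := min (x - a) (b - x) with hε
    have hε0 : 0 < ε := lt_min (by linarith) (by linarith)
    refine ⟨{y | A.valuation (y - x) < A.valuation (ε * d)}, ⟨x, A.valuation (ε * d), ?_, rfl⟩, ?_, ?_⟩
    · exact (Valuation.ne_zero_iff _).mpr (mul_ne_zero (ne_of_gt hε0) hd0)
    · show A.valuation (x - x) < _
      simp only [sub_self, map_zero]
      exact zero_lt_iff.mpr ((Valuation.ne_zero_iff _).mpr (mul_ne_zero (ne_of_gt hε0) hd0))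
    · intro y hy
      have h1 : |y - x| < |ε * d| :=
        aux_abs_lt A _ _ (mul_ne_zero (ne_of_gt hε0) hd0) hy
      have h2 : |ε * d| < ε := by
        rw [abs_mul, abs_of_pos hε0]
        exact mul_lt_of_lt_one_right hε0 hdabs
      have h3 : |y - x| < ε := h1.trans h2
      rw [abs_lt] at h3
      constructor
      · have := min_le_left (x - a) (b - x)
        linarith [h3.1]
      · have := min_le_right (x - a) (b - x)
        linarith [h3.2]
  · -- order topology ≤ valuation topology : every ball is order-open
    apply le_generateFrom
    rintro s ⟨a, γ, hγ, rfl⟩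
    apply aux_gen_open
    intro x hx
    have hx' : A.valuation (x - a) < γ := hx
    obtain ⟨c', hc'⟩ := A.valuation_surjective γ
    have hc'0 : c' ≠ 0 := by
      intro h
      rw [h, map_zero] at hc'
      exact hγ hc'.symm
    set e := c' * d with he
    have he0 : e ≠ 0 := mul_ne_zero hc'0 hd0
    have hev : A.valuation e < γ := by
      rw [he, map_mul, hc']
      have := mul_lt_mul_of_pos_left hdv (zero_lt_iff.mpr hγ)
      simpa using this
    refine ⟨Set.Ioo (x - |e|) (x + |e|), ⟨x - |e|, x + |e|, rfl⟩, ?_, ?_⟩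
    · constructor <;> [skip; skip] <;>
        · have := abs_pos.mpr he0
          linarith
    · rintro y ⟨hy1, hy2⟩
      show A.valuation (y - a) < γ
      have habs : |y - x| < |e| := by
        rw [abs_lt]; constructor <;> linarith
      have h1 : A.valuation (y - x) ≤ A.valuation e := aux_val_le A _ _ habs
      have h2 : A.valuation (y - x) < γ := lt_of_le_of_lt h1 hev
      have : y - a = (y - x) + (x - a) := by ring
      rw [this]
      exact lt_of_le_of_lt (Valuation.map_add _ _ _) (max_lt h2 hx')


/-- On an almost real closed field with an order `<` making it a linearly ordered field,
the topology induced by (the valuation associated to) any proper henselian valuation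
subring coincides with the order topology. -/
theorem valuationTopology_eq_orderTopology (K : Type*) [Field K] [LinearOrder K]
    [IsStrictOrderedRing K]
    (hK : IsAlmostRealClosedField K) (A : ValuationSubring K)
    (hproper : (A : Set K) ≠ Set.univ) (hhens : HenselianLocalRing A) :
    valuationTopologyOf A = orderTopologyOf K := by
  unfold valuationTopologyOf orderTopologyOf
  exact valuationTopology_eq_orderTopology' K A hproper hhens
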